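/- Let 1 ≤ N < L be integers, set ρ = N/L and 𝕣₀ = ρ^ρ(1−ρ)^{1−ρ}, and let z ∈ ℂ with 0 < |z| < 𝕣₀. With L_z and R_z the sets of roots of w^N(w+1)^{L−N} = z^L having Re(w) < −ρ and Re(w) > −ρ respectively, one has ∏_{u∈L_z} (−u)^N = ∏_{v∈R_z} (v+1)^{L−N}. -/

import Mathlib

open scoped BigOperators

open Complex Polynomial

set_option maxHeartbeats 1000000 in
lemma core (A B : ℕ) (hA : 1 ≤ A) (hB : 1 ≤ B) (c : ℂ) (hc : c ≠ 0)
    (hlt : ‖c‖ < ((A : ℝ) / ((A : ℝ) + B)) ^ A * ((B : ℝ) / ((A : ℝ) + B)) ^ B)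
    (T : Finset ℂ)
    (hT : ∀ w : ℂ, w ∈ T ↔
      (w ^ A * (w + 1) ^ B = c ∧ ‖w‖ < (A : ℝ) / ((A : ℝ) + B))) :
    T.card = A := by
  have hA0 : (0:ℝ) < A := by exact_mod_cast hA
  have hB0 : (0:ℝ) < B := by exact_mod_cast hB
  have hL0 : (0:ℝ) < (A:ℝ) + B := by linarith
  set ρ : ℝ := (A:ℝ) / ((A:ℝ) + B) with hρ
  set σ : ℝ := (B:ℝ) / ((A:ℝ) + B) with hσ
  have hρ0 : 0 < ρ := div_pos hA0 hL0
  have hσ0 : 0 < σ := div_pos hB0 hL0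
  have hρσ : ρ + σ = 1 := by rw [hρ, hσ, ← add_div, div_self hL0.ne']
  have hρ1 : ρ < 1 := by linarith
  have hc0 : 0 < ‖c‖ := by
    exact norm_pos_iff.mpr hc
  set m : ℝ := ‖c‖ / σ ^ B with hm
  have hm0 : 0 < m := div_pos hc0 (pow_pos hσ0 B)
  have hmρ : m < ρ ^ A := by
    rw [hm, div_lt_iff₀ (pow_pos hσ0 B)]
    exact hlt
  set r : ℝ := m ^ ((A:ℝ)⁻¹) with hr
  have hr0 : 0 < r := Real.rpow_pos_of_pos hm0 _
  have hrA : r ^ A = m := Real.rpow_inv_natCast_pow hm0.le (by omega)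
  have hrρ : r < ρ := by
    have h := Real.rpow_lt_rpow hm0.le hmρ (by positivity : (0:ℝ) < (A:ℝ)⁻¹)
    rwa [Real.pow_rpow_inv_natCast hρ0.le (by omega)] at h
  have hr1 : r < 1 := hrρ.trans hρ1
  have hσ1r : σ < 1 - r := by linarith
  -- all small roots are in the closed ball of radius r
  have hsmall : ∀ w : ℂ, w ^ A * (w + 1) ^ B = c → ‖w‖ < ρ →
      ‖w‖ ≤ r := by
    intro w hw hwρ
    have h1 : σ < ‖(w + 1)‖ := by
      have h2 : (1:ℝ) ≤ ‖(w + 1)‖ + ‖w‖ := by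
        calc (1:ℝ) = ‖((w+1) - w)‖ := by norm_num
          _ ≤ _ := norm_sub_le _ _
      linarith
    have habs : ‖w‖ ^ A * ‖(w + 1)‖ ^ B = ‖c‖ := by
      rw [← norm_pow, ← norm_pow, ← norm_mul, hw]
    have h2 : ‖w‖ ^ A ≤ m := by
      rw [hm, le_div_iff₀ (pow_pos hσ0 B)]
      calc ‖w‖ ^ A * σ ^ B ≤ ‖w‖ ^ A * ‖(w+1)‖ ^ B := by
            gcongr
        _ = ‖c‖ := habs
    have h3 := Real.rpow_le_rpow (by positivity) h2 (by positivity : (0:ℝ) ≤ (A:ℝ)⁻¹)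
    rw [Real.pow_rpow_inv_natCast (norm_nonneg w) (by omega)] at h3
    exact h3
  -- choose an A-th root of c
  obtain ⟨d, hdA⟩ : ∃ y : ℂ, y ^ A = c := by
    obtain ⟨y, hy⟩ := IsAlgClosed.exists_root (k := ℂ) (X ^ A - C c)
      (by rw [degree_X_pow_sub_C (by omega : 0 < A) c]; exact_mod_cast (by omega : A ≠ 0))
    exact ⟨y, by simpa [sub_eq_zero] using hy⟩
  have hd0 : d ≠ 0 := by
    intro h; apply hc; rw [← hdA, h, zero_pow (by omega : A ≠ 0)]
  set β : ℝ := (B:ℝ) / A with hβ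
  have hβ0 : 0 < β := div_pos hB0 hA0
  set g : ℂ → ℂ := fun w => d * (w + 1) ^ ((↑(-β) : ℂ)) with hg
  -- modulus of d
  have hdabs : ‖d‖ = r * σ ^ β := by
    have h1 : ‖d‖ ^ A = ‖c‖ := by rw [← norm_pow, hdA]
    have h2 : (r * σ ^ β) ^ A = ‖c‖ := by
      rw [mul_pow, hrA]
      have : (σ ^ β) ^ A = σ ^ B := by
        rw [← Real.rpow_natCast (σ ^ β) A, ← Real.rpow_mul hσ0.le]
        rw [hβ, div_mul_cancel₀]
        · exact Real.rpow_natCast σ B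
        · exact ne_of_gt hA0
      rw [this, hm, div_mul_cancel₀]
      exact (pow_pos hσ0 B).ne'
    rw [← pow_left_inj₀ (norm_nonneg d) (by positivity) (by omega : A ≠ 0), h1, h2]
  -- triangle-type bound
  have h1r : ∀ w : ℂ, ‖w‖ ≤ r → 1 - r ≤ ‖(w + 1)‖ := by
    intro w hw
    have h2 : (1:ℝ) ≤ ‖(w + 1)‖ + ‖w‖ := by
      calc (1:ℝ) = ‖((w + 1) - w)‖ := by norm_num
        _ ≤ _ := norm_sub_le _ _
    linarith
  have h1r0 : (0:ℝ) < 1 - r := by linarith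
  have hw1re : ∀ w : ℂ, ‖w‖ ≤ r → 0 < (w + 1).re := by
    intro w hw
    have h1 : -‖w‖ ≤ w.re := by
      have := (abs_le.1 (Complex.abs_re_le_norm w)).1; linarith
    have : (w + 1).re = w.re + 1 := by simp
    rw [this]; linarith
  have hw1ne : ∀ w : ℂ, ‖w‖ ≤ r → w + 1 ≠ 0 := by
    intro w hw h
    have := hw1re w hw
    rw [h] at this; simp at this
  set sc : ℂ := ((-β : ℝ) : ℂ) with hsc
  have hgabs : ∀ w : ℂ, ‖w‖ ≤ r → ‖(g w)‖ ≤ r := by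
    intro w hw
    have h2 : ‖(g w)‖ = r * σ ^ β * ‖(w + 1)‖ ^ (-β) := by
      rw [hg]; rw [norm_mul, hdabs, Complex.norm_cpow_real]
    have h4 : σ ^ β ≤ ‖(w + 1)‖ ^ β := by
      calc σ ^ β ≤ (1 - r) ^ β := Real.rpow_le_rpow hσ0.le hσ1r.le hβ0.le
        _ ≤ _ := Real.rpow_le_rpow h1r0.le (h1r w hw) hβ0.le
    have h5 : (0:ℝ) < ‖(w + 1)‖ ^ β :=
      Real.rpow_pos_of_pos (lt_of_lt_of_le h1r0 (h1r w hw)) β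
    have h6 : σ ^ β * (‖(w + 1)‖ ^ β)⁻¹ ≤ 1 := by
      rw [← div_eq_mul_inv]
      exact div_le_one_of_le₀ h4 h5.le
    rw [h2, Real.rpow_neg (norm_nonneg _)]
    calc r * σ ^ β * (‖(w + 1)‖ ^ β)⁻¹
        = r * (σ ^ β * (‖(w + 1)‖ ^ β)⁻¹) := by ring
      _ ≤ r * 1 := by
          exact mul_le_mul_of_nonneg_left h6 hr0.le
      _ = r := mul_one r
  -- contraction constant
  set K : ℝ := β * r * σ ^ β * ((1 - r) ^ (β + 1))⁻¹ with hK
  have hK0 : 0 ≤ K := by positivity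
  have hK1 : K < 1 := by
    have hb0 : (0:ℝ) < (1 - r) ^ β := Real.rpow_pos_of_pos h1r0 β
    have h2 : (1 - r) ^ (β + 1) = (1 - r) ^ β * (1 - r) := by
      rw [Real.rpow_add h1r0, Real.rpow_one]
    have h1 : σ ^ β ≤ (1 - r) ^ β := Real.rpow_le_rpow hσ0.le hσ1r.le hβ0.le
    have h5 : ρ * (β + 1) = 1 := by rw [hρ, hβ]; field_simp; ring
    have h4 : β * r < 1 - r := by
      nlinarith [mul_lt_mul_of_pos_right hrρ (by linarith : (0:ℝ) < β + 1)]
    have hσβ : (0:ℝ) < σ ^ β := Real.rpow_pos_of_pos hσ0 β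
    have h6 : β * r * σ ^ β < (1 - r) ^ β * (1 - r) := by nlinarith
    rw [hK, h2, ← div_eq_mul_inv]
    exact (div_lt_one (by positivity)).2 h6
  -- derivative
  have hderiv : ∀ u : ℂ, ∀ w : ℂ, ‖w‖ ≤ r →
      HasDerivAt (fun x => u * g x) (u * (d * (sc * (w + 1) ^ (sc - 1) * 1))) w := by
    intro u w hw
    have h0 : (w + 1) ∈ Complex.slitPlane := Or.inl (hw1re w hw)
    have h1 : HasDerivAt (fun x : ℂ => x + 1) 1 w := (hasDerivAt_id w).add_const 1
    have h2 : HasDerivAt (fun x : ℂ => (x + 1) ^ sc) (sc * (w + 1) ^ (sc - 1) * 1) w :=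
      h1.cpow_const h0
    exact (h2.const_mul d).const_mul u
  have hdbound : ∀ u : ℂ, ‖u‖ = 1 → ∀ w : ℂ, ‖w‖ ≤ r →
      ‖(u * (d * (sc * (w + 1) ^ (sc - 1) * 1)))‖ ≤ K := by
    intro u hu w hw
    have habs1 : ‖((w + 1) ^ (sc - 1))‖ = ‖(w + 1)‖ ^ (-β - 1) := by
      have hsc1 : sc - 1 = ((-β - 1 : ℝ) : ℂ) := by rw [hsc]; push_cast; ring
      rw [hsc1, Complex.norm_cpow_real]
    have habss : ‖sc‖ = β := by
      rw [hsc, Complex.norm_real, Real.norm_eq_abs, abs_of_nonpos (by linarith)]; ring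
    have h2 : ‖(w + 1)‖ ^ (-β - 1) ≤ ((1 - r) ^ (β + 1))⁻¹ := by
      rw [show (-β - 1 : ℝ) = -(β + 1) by ring, Real.rpow_neg (norm_nonneg _)]
      have h3 : (1 - r) ^ (β + 1) ≤ ‖(w + 1)‖ ^ (β + 1) :=
        Real.rpow_le_rpow h1r0.le (h1r w hw) (by linarith)
      exact inv_anti₀ (Real.rpow_pos_of_pos h1r0 _) h3
    calc ‖(u * (d * (sc * (w + 1) ^ (sc - 1) * 1)))‖
        = (r * σ ^ β) * (β * ‖(w + 1)‖ ^ (-β - 1)) := by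
          rw [norm_mul, norm_mul, norm_mul, norm_mul, hu, hdabs, habss, habs1]
          simp [mul_comm, mul_assoc, mul_left_comm]
      _ ≤ (r * σ ^ β) * (β * ((1 - r) ^ (β + 1))⁻¹) := by
          have hσβ : (0:ℝ) < σ ^ β := Real.rpow_pos_of_pos hσ0 β
          apply mul_le_mul_of_nonneg_left _ (by positivity)
          exact mul_le_mul_of_nonneg_left h2 hβ0.le
      _ = K := by rw [hK]; ring
  -- Banach fixed point: existence and uniqueness of branch roots
  set D : Set ℂ := Metric.closedBall (0:ℂ) r with hDdef
  have hmemD : ∀ w : ℂ, w ∈ D ↔ ‖w‖ ≤ r := by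
    intro w
    rw [hDdef, Metric.mem_closedBall, Complex.dist_eq, sub_zero]
  have hclosed : IsClosed D := Metric.isClosed_closedBall
  have key : ∀ u : ℂ, ‖u‖ = 1 → ∃! w : ℂ, ‖w‖ ≤ r ∧ u * g w = w := by
    intro u hu
    have hlip : ∀ x ∈ D, ∀ y ∈ D, ‖u * g y - u * g x‖ ≤ K * ‖y - x‖ := by
      intro x hx y hy
      exact Convex.norm_image_sub_le_of_norm_hasDerivWithin_le
        (fun w hw => (hderiv u w ((hmemD w).1 hw)).hasDerivWithinAt)
        (fun w hw => by
          exact hdbound u hu w ((hmemD w).1 hw))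
        (convex_closedBall _ _) hx hy
    haveI : Nonempty D := ⟨⟨0, (hmemD 0).2 (by simpa using hr0.le)⟩⟩
    haveI := hclosed.completeSpace_coe
    set f : D → D := fun x => ⟨u * g x,
      (hmemD _).2 (by rw [norm_mul, hu, one_mul]; exact hgabs x ((hmemD x).1 x.2))⟩ with hf
    have hcon : ContractingWith (Real.toNNReal K) f := by
      constructor
      · exact_mod_cast Real.toNNReal_lt_one.2 hK1
      · apply LipschitzWith.of_dist_le_mul
        intro x y
        have h1 := hlip y y.2 x x.2
        rw [Subtype.dist_eq, Subtype.dist_eq, dist_eq_norm, dist_eq_norm]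
        rw [Real.coe_toNNReal K hK0]
        exact h1
    set w₀ : D := ContractingWith.fixedPoint f hcon with hw₀
    have hfix : f w₀ = w₀ := hcon.fixedPoint_isFixedPt
    refine ⟨(w₀ : ℂ), ⟨(hmemD _).1 w₀.2, ?_⟩, ?_⟩
    · exact congrArg Subtype.val hfix
    · intro y hy
      have hyD : y ∈ D := (hmemD y).2 hy.1
      have hyfix : f ⟨y, hyD⟩ = ⟨y, hyD⟩ := Subtype.ext hy.2
      have := hcon.fixedPoint_unique (x := ⟨y, hyD⟩) hyfix
      rw [← hw₀] at this
      exact congrArg Subtype.val this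
  -- algebraic identities for g
  have hg0 : ∀ w : ℂ, ‖w‖ ≤ r → g w ≠ 0 := by
    intro w hw h
    rw [hg] at h
    rcases mul_eq_zero.1 h with h | h
    · exact hd0 h
    · rw [Complex.cpow_eq_zero_iff] at h
      exact hw1ne w hw h.1
  have hgA : ∀ w : ℂ, ‖w‖ ≤ r → (g w) ^ A * (w + 1) ^ B = c := by
    intro w hw
    have hne : (w + 1) ≠ 0 := hw1ne w hw
    have h1 : ((w + 1) ^ sc) ^ A = (w + 1) ^ ((A : ℂ) * sc) := by
      rw [show ((A:ℂ) * sc) = ((A:ℕ) : ℂ) * sc by norm_num, Complex.cpow_nat_mul]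
    have h2 : (A : ℂ) * sc = -(B : ℂ) := by
      have hAne : (A:ℂ) ≠ 0 := Nat.cast_ne_zero.2 (by omega)
      rw [hsc, hβ]
      push_cast
      rw [mul_neg, mul_div_assoc', mul_comm, mul_div_assoc, div_self hAne, mul_one]
    have h3 : (w + 1) ^ (-(B:ℂ)) = ((w + 1) ^ B)⁻¹ := by
      rw [Complex.cpow_neg, Complex.cpow_natCast]
    calc (g w) ^ A * (w + 1) ^ B
        = d ^ A * (((w + 1) ^ sc) ^ A * (w + 1) ^ B) := by rw [hg]; ring
      _ = c * (((w + 1) ^ B)⁻¹ * (w + 1) ^ B) := by rw [h1, h2, h3, hdA]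
      _ = c := by rw [inv_mul_cancel₀ (pow_ne_zero _ hne), mul_one]
  -- membership facts
  have hTr : ∀ w ∈ T, ‖w‖ ≤ r := by
    intro w hw
    obtain ⟨h1, h2⟩ := (hT w).1 hw
    exact hsmall w h1 h2
  set μ : Finset ℂ := Polynomial.nthRootsFinset A (1 : ℂ) with hμdef
  have hμ : ∀ x : ℂ, x ∈ μ ↔ x ^ A = 1 := fun x =>
    Polynomial.mem_nthRootsFinset (by omega) 1
  have hμcard : μ.card = A := (Complex.isPrimitiveRoot_exp A (by omega)).card_nthRootsFinset
  have hμabs : ∀ u ∈ μ, ‖u‖ = 1 := by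
    intro u hu
    have h1 : ‖u‖ ^ A = 1 := by
      rw [← norm_pow, (hμ u).1 hu, norm_one]
    apply (pow_left_inj₀ (norm_nonneg u) zero_le_one (by omega : A ≠ 0)).1
    rw [h1, one_pow]
  -- the bijection w ↦ w / g w
  have hjprop : ∀ u : ℂ, ∀ hu : ‖u‖ = 1,
      ‖(Classical.choose (key u hu).exists)‖ ≤ r ∧
      u * g (Classical.choose (key u hu).exists) = Classical.choose (key u hu).exists :=
    fun u hu => Classical.choose_spec (key u hu).exists
  have hroot_of : ∀ u : ℂ, u ^ A = 1 → ∀ w : ℂ, ‖w‖ ≤ r → u * g w = w →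
      w ^ A * (w + 1) ^ B = c := by
    intro u hu w hw hfix
    have h5 : w ^ A = (g w) ^ A := by
      calc w ^ A = (u * g w) ^ A := by rw [hfix]
        _ = u ^ A * g w ^ A := mul_pow u (g w) A
        _ = g w ^ A := by rw [hu, one_mul]
    rw [h5]
    exact hgA w hw
  have hin : ∀ w ∈ T, w / g w ∈ μ := by
    intro w hw
    obtain ⟨h1, h2⟩ := (hT w).1 hw
    have hwr := hsmall w h1 h2
    rw [hμ]
    have h3 := hgA w hwr
    have h5 : w ^ A = g w ^ A :=
      mul_right_cancel₀ (pow_ne_zero _ (hw1ne w hwr)) (h1.trans h3.symm)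
    rw [div_pow, h5, div_self (pow_ne_zero _ (hg0 w hwr))]
  have habsdiv : ∀ w ∈ T, ‖(w / g w)‖ = 1 := by
    intro w hw
    exact hμabs _ (hin w hw)
  rw [← hμcard]
  apply Finset.card_bij' (i := fun w _ => w / g w)
    (j := fun u hu => Classical.choose (key u (hμabs u hu)).exists)
  · -- j maps into T
    intro u hu
    obtain ⟨h1, h2⟩ := hjprop u (hμabs u hu)
    rw [hT]
    exact ⟨hroot_of u ((hμ u).1 hu) _ h1 h2, lt_of_le_of_lt h1 hrρ⟩
  · -- left inverse : j (i a) = a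
    intro w hw
    obtain ⟨h1, h2⟩ := (hT w).1 hw
    have hwr := hsmall w h1 h2
    have habs1 := habsdiv w hw
    apply (key _ habs1).unique (hjprop _ habs1) ⟨hwr, ?_⟩
    rw [div_mul_cancel₀ _ (hg0 w hwr)]
  · -- right inverse : i (j u) = u
    intro u hu
    obtain ⟨h1, h2⟩ := hjprop u (hμabs u hu)
    nth_rewrite 1 [← h2]
    rw [mul_div_assoc, div_self (hg0 _ h1), mul_one]
  · intro a ha
    exact hin a ha



lemma vieta (NN LL : ℕ) (h1 : 1 ≤ NN) (h2 : NN < LL) (c : ℂ) (S : Finset ℂ)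
    (hcard : S.card = LL)
    (hroots : ∀ w ∈ S, w ^ NN * (w + 1) ^ (LL - NN) = c) :
    ∏ w ∈ S, (-w) = -c := by
  set p : Polynomial ℂ := X ^ NN * (X + 1) ^ (LL - NN) - C c with hp
  have hXC : (X + 1 : Polynomial ℂ) = X + C 1 := by rw [C_1]
  have hmon0 : (X ^ NN * (X + 1) ^ (LL - NN) : Polynomial ℂ).Monic := by
    rw [hXC]; exact (monic_X_pow NN).mul ((monic_X_add_C (1 : ℂ)).pow _)
  have hdeg0 : (X ^ NN * (X + 1) ^ (LL - NN) : Polynomial ℂ).natDegree = LL := by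
    rw [hXC, natDegree_mul (monic_X_pow NN).ne_zero
        (((monic_X_add_C (1:ℂ)).pow _).ne_zero),
      natDegree_X_pow, natDegree_pow, natDegree_X_add_C]
    omega
  have hmon : p.Monic := by
    have heq : p = X ^ NN * (X + 1) ^ (LL - NN) + (-C c) := by ring
    rw [heq]
    refine hmon0.add_of_left ?_
    calc (-C c : Polynomial ℂ).degree ≤ 0 := by simpa using degree_C_le (a := -c)
      _ < (LL : WithBot ℕ) := by exact_mod_cast Nat.cast_pos.mpr (by omega)
      _ = _ := by rw [degree_eq_natDegree hmon0.ne_zero, hdeg0]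
  have hdeg : p.natDegree = LL := by
    rw [hp, natDegree_sub_C, hdeg0]
  have hne : p ≠ 0 := hmon.ne_zero
  have hSroots : S.val ≤ p.roots := by
    rw [Multiset.le_iff_count]
    intro a
    by_cases ha : a ∈ S
    · have h1' : S.val.count a = 1 := by
        rw [Multiset.count_eq_one_of_mem S.nodup ha]
      rw [h1']
      rw [Multiset.one_le_count_iff_mem, mem_roots hne]
      show p.eval a = 0
      simp [hp, hroots a ha]
    · simp [Multiset.count_eq_zero_of_notMem (s := S.val) (by exact ha)]
  have hcards : p.roots = S.val := by
    refine (Multiset.eq_of_le_of_card_le hSroots ?_).symm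
    calc Multiset.card p.roots ≤ p.natDegree := p.card_roots'
      _ = LL := hdeg
      _ = Multiset.card S.val := by rw [← hcard]; rfl
  have hsplit : p = (p.roots.map fun a => X - C a).prod :=
    (IsAlgClosed.splits p).eq_prod_roots_of_monic hmon
  have hev : p.eval 0 = -c := by
    simp [hp, zero_pow (by omega : NN ≠ 0)]
  rw [hsplit, hcards] at hev
  rw [← hev]
  rw [eval_multiset_prod]
  simp only [Multiset.map_map, Function.comp]
  rw [Finset.prod_eq_multiset_prod]
  congr 1
  simp


set_option maxHeartbeats 1000000 in
lemma core' (A B : ℕ) (hA : 1 ≤ A) (hB : 1 ≤ B) (c : ℂ) (hc : c ≠ 0)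
    (hlt : ‖c‖ < ((A : ℝ) / ((A : ℝ) + B)) ^ A * ((B : ℝ) / ((A : ℝ) + B)) ^ B)
    (T : Finset ℂ)
    (hT : ∀ w : ℂ, w ∈ T ↔
      (w ^ A * (w + 1) ^ B = c ∧ -((A : ℝ) / ((A : ℝ) + B)) < w.re)) :
    T.card = A := by
  have hA0 : (0:ℝ) < A := by exact_mod_cast hA
  have hB0 : (0:ℝ) < B := by exact_mod_cast hB
  have hL0 : (0:ℝ) < (A:ℝ) + B := by linarith
  have hρσ : (A:ℝ) / ((A:ℝ) + B) + (B:ℝ) / ((A:ℝ) + B) = 1 := by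
    rw [← add_div, div_self hL0.ne']
  apply core A B hA hB c hc hlt T
  intro w
  rw [hT w]
  constructor
  · rintro ⟨h1, h2⟩
    refine ⟨h1, ?_⟩
    by_contra h3
    push_neg at h3
    have h4 : (B:ℝ) / ((A:ℝ) + B) ≤ ‖(w + 1)‖ := by
      by_contra h5
      push_neg at h5
      have h6 : (w + 1).re ≤ ‖(w + 1)‖ := Complex.re_le_norm _
      have h7 : (w + 1).re = w.re + 1 := by simp
      linarith
    have h9 : ‖w‖ ^ A * ‖(w + 1)‖ ^ B = ‖c‖ := by
      rw [← norm_pow, ← norm_pow, ← norm_mul, h1]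
    have h8 : ((A:ℝ) / ((A:ℝ) + B)) ^ A * ((B:ℝ) / ((A:ℝ) + B)) ^ B ≤
        ‖w‖ ^ A * ‖(w + 1)‖ ^ B := by
      gcongr <;> first
        | positivity
        | exact h3
        | exact h4
        | exact div_nonneg hB0.le hL0.le
    linarith
  · rintro ⟨h1, h2⟩
    refine ⟨h1, ?_⟩
    have h3 := (abs_le.1 (Complex.abs_re_le_norm w)).1
    linarith


set_option maxHeartbeats 1000000 in
/-- With `L_z` and `R_z` the sets of roots of `w^N(w+1)^{L−N} = z^L` having
`Re(w) < −ρ` and `Re(w) > −ρ` respectively (`ρ = N/L`, `0 < |z| < 𝕣₀`), one has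
`∏_{u∈L_z} (−u)^N = ∏_{v∈R_z} (v+1)^{L−N}`. -/
theorem prod_Lz_eq_prod_Rz
    (N L : ℕ) (hN : 1 ≤ N) (hNL : N < L)
    (z : ℂ) (hz : z ≠ 0)
    (hzr : ‖z‖ <
      ((N : ℝ) / L) ^ ((N : ℝ) / L) * (1 - (N : ℝ) / L) ^ (1 - (N : ℝ) / L))
    (Lz Rz : Finset ℂ)
    (hLz : ∀ w : ℂ, w ∈ Lz ↔
      (w ^ N * (w + 1) ^ (L - N) = z ^ L ∧ w.re < -((N : ℝ) / L)))
    (hRz : ∀ w : ℂ, w ∈ Rz ↔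
      (w ^ N * (w + 1) ^ (L - N) = z ^ L ∧ -((N : ℝ) / L) < w.re)) :
    (∏ u ∈ Lz, (-u) ^ N) = ∏ v ∈ Rz, (v + 1) ^ (L - N) := by
  have hL0 : (0:ℝ) < L := by exact_mod_cast (id (by omega : 0 < L))
  have hN0 : (0:ℝ) < N := by exact_mod_cast hN
  have hMcast : ((L - N : ℕ) : ℝ) = (L:ℝ) - N := by
    rw [Nat.cast_sub hNL.le]
  have hsum : (N:ℝ) + ((L - N : ℕ):ℝ) = L := by rw [hMcast]; ring
  have hρ0 : (0:ℝ) < (N:ℝ)/L := div_pos hN0 hL0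
  have hρ1 : (N:ℝ)/L < 1 := by
    rw [div_lt_one hL0]; exact_mod_cast hNL
  have hσeq : 1 - (N:ℝ)/L = ((L - N : ℕ):ℝ)/L := by
    rw [hMcast]; field_simp
  -- modulus bound
  have hzL : ‖(z ^ L)‖ <
      ((N:ℝ)/L) ^ N * (((L - N : ℕ):ℝ)/L) ^ (L - N) := by
    rw [norm_pow]
    have h1 : ‖z‖ ^ L <
        (((N:ℝ)/L) ^ ((N:ℝ)/L) * (1 - (N:ℝ)/L) ^ (1 - (N:ℝ)/L)) ^ L :=
      pow_lt_pow_left₀ hzr (norm_nonneg z) (by omega)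
    refine h1.trans_le (le_of_eq ?_)
    rw [mul_pow]
    have e1 : (((N:ℝ)/L) ^ ((N:ℝ)/L)) ^ L = ((N:ℝ)/L) ^ N := by
      rw [← Real.rpow_natCast (((N:ℝ)/L) ^ ((N:ℝ)/L)) L, ← Real.rpow_mul hρ0.le,
        show (N:ℝ)/L * L = (N:ℝ) by field_simp, Real.rpow_natCast]
    have e2 : ((1 - (N:ℝ)/L) ^ (1 - (N:ℝ)/L)) ^ L = (1 - (N:ℝ)/L) ^ (L - N) := by
      rw [← Real.rpow_natCast ((1 - (N:ℝ)/L) ^ (1 - (N:ℝ)/L)) L,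
        ← Real.rpow_mul (by linarith),
        show (1 - (N:ℝ)/L) * L = ((L - N : ℕ):ℝ) by rw [hMcast]; field_simp,
        Real.rpow_natCast]
    rw [e1, e2, hσeq]
  -- count of Rz
  have hRcard : Rz.card = N := by
    apply core' N (L - N) hN (by omega) (z ^ L) (pow_ne_zero _ hz) ?_ Rz ?_
    · rw [hsum]
      exact hzL
    · intro w
      rw [hsum]
      exact hRz w
  -- count of Lz via the transform y = -1 - w
  set c' : ℂ := (-1) ^ L * z ^ L with hc'def
  have hps : ((-1:ℂ) ^ L) * ((-1:ℂ) ^ L) = 1 := by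
    rw [← pow_add, ← two_mul, pow_mul]; norm_num
  have hc'0 : c' ≠ 0 := by
    rw [hc'def]
    exact mul_ne_zero (pow_ne_zero _ (by norm_num)) (pow_ne_zero _ hz)
  have hc'abs : ‖c'‖ = ‖(z ^ L)‖ := by
    rw [hc'def, norm_mul, norm_pow]
    simp
  have hkey : ∀ y : ℂ, (-1 - y) ^ N * ((-1 - y) + 1) ^ (L - N)
      = (-1:ℂ) ^ L * (y ^ (L - N) * (y + 1) ^ N) := by
    intro y
    have h1 : (-1 - y : ℂ) = -(y + 1) := by ring
    have h2 : (-1 - y + 1 : ℂ) = -y := by ring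
    rw [h2, h1, neg_pow (y + 1) N, neg_pow y (L - N),
      show (-1:ℂ) ^ N * (y + 1) ^ N * ((-1:ℂ) ^ (L - N) * y ^ (L - N))
        = ((-1:ℂ) ^ N * (-1:ℂ) ^ (L - N)) * (y ^ (L - N) * (y + 1) ^ N) from by ring,
      ← pow_add, show N + (L - N) = L from by omega]
  have hLcard : Lz.card = L - N := by
    have hinj : Function.Injective (fun w : ℂ => -1 - w) := by
      intro a b h
      have := congrArg (fun t : ℂ => -1 - t) h
      simpa using this
    rw [← Finset.card_image_of_injective Lz hinj]
    apply core' (L - N) N (by omega) hN c' hc'0 ?_ _ ?_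
    · have hsum2 : ((L - N : ℕ):ℝ) + (N:ℝ) = L := by rw [hMcast]; ring
      rw [hsum2, hc'abs]
      rw [mul_comm]
      exact hzL
    · intro y
      have hmemim : y ∈ Lz.image (fun w : ℂ => -1 - w) ↔ -1 - y ∈ Lz := by
        rw [Finset.mem_image]
        constructor
        · rintro ⟨w, hw, rfl⟩
          have h3 : (-1 : ℂ) - (-1 - w) = w := by ring
          rw [h3]
          exact hw
        · intro h
          exact ⟨-1 - y, h, by ring⟩
      rw [hmemim, hLz (-1 - y)]
      have hre : (-1 - y : ℂ).re = -1 - y.re := by simp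
      have hsum2 : ((L - N : ℕ):ℝ) + (N:ℝ) = L := by rw [hMcast]; ring
      rw [hsum2, hkey y, hre]
      constructor
      · rintro ⟨h1, h2⟩
        constructor
        · have h3 := congrArg (fun t : ℂ => (-1:ℂ) ^ L * t) h1
          simpa [← mul_assoc, hps, hc'def] using h3
        · have h4 : (N:ℝ)/L - 1 = -(((L - N : ℕ):ℝ)/L) := by
            rw [hMcast]; field_simp; ring
          linarith
      · rintro ⟨h1, h2⟩
        constructor
        · rw [h1, hc'def, ← mul_assoc, hps, one_mul]
        · have h4 : (N:ℝ)/L - 1 = -(((L - N : ℕ):ℝ)/L) := by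
            rw [hMcast]; field_simp; ring
          linarith
  -- union of the two root sets
  have hdisj : Disjoint Lz Rz := by
    rw [Finset.disjoint_left]
    intro w h1 h2
    have ha := ((hLz w).1 h1).2
    have hb := ((hRz w).1 h2).2
    linarith
  have hScard : (Lz ∪ Rz).card = L := by
    rw [Finset.card_union_of_disjoint hdisj, hLcard, hRcard]; omega
  have hSroot : ∀ w ∈ Lz ∪ Rz, w ^ N * (w + 1) ^ (L - N) = z ^ L := by
    intro w hw
    rcases Finset.mem_union.1 hw with h | h
    exacts [((hLz w).1 h).1, ((hRz w).1 h).1]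
  have hprod := vieta N L hN hNL (z ^ L) (Lz ∪ Rz) hScard hSroot
  -- final algebra
  have h1 : (∏ u ∈ Lz, (-u) ^ N) * (∏ v ∈ Rz, (-v) ^ N) = (-(z ^ L)) ^ N := by
    rw [← Finset.prod_union hdisj, Finset.prod_pow, hprod]
  have h2 : (∏ v ∈ Rz, (-v) ^ N) * (∏ v ∈ Rz, (v + 1) ^ (L - N))
      = ((-1:ℂ) ^ N * z ^ L) ^ N := by
    rw [← Finset.prod_mul_distrib]
    have h3 : ∀ v ∈ Rz, (-v) ^ N * (v + 1) ^ (L - N) = (-1:ℂ) ^ N * z ^ L := by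
      intro v hv
      rw [neg_pow, mul_assoc, ((hRz v).1 hv).1]
    rw [Finset.prod_congr rfl h3, Finset.prod_const, hRcard]
  have hs2 : (-(z ^ L)) ^ N = ((-1:ℂ) ^ N * z ^ L) ^ N := by
    have hpp : (((-1:ℂ) ^ N) ^ N) = (-1:ℂ) ^ N := by
      rcases Nat.even_or_odd N with h | h
      · simp [h.neg_one_pow]
      · simp [h.neg_one_pow]
    rw [neg_pow, mul_pow, hpp]
  have hX0 : ((-1:ℂ) ^ N * z ^ L) ^ N ≠ 0 :=
    pow_ne_zero _ (mul_ne_zero (pow_ne_zero _ (by norm_num)) (pow_ne_zero _ hz))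
  apply mul_right_cancel₀ hX0
  calc (∏ u ∈ Lz, (-u) ^ N) * ((-1:ℂ) ^ N * z ^ L) ^ N
      = (∏ u ∈ Lz, (-u) ^ N) * ((∏ v ∈ Rz, (-v) ^ N) * (∏ v ∈ Rz, (v + 1) ^ (L - N))) := by
        rw [h2]
    _ = ((∏ u ∈ Lz, (-u) ^ N) * (∏ v ∈ Rz, (-v) ^ N)) * (∏ v ∈ Rz, (v + 1) ^ (L - N)) := by
        ring
    _ = (-(z ^ L)) ^ N * (∏ v ∈ Rz, (v + 1) ^ (L - N)) := by rw [h1]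
    _ = (∏ v ∈ Rz, (v + 1) ^ (L - N)) * ((-1:ℂ) ^ N * z ^ L) ^ N := by
        rw [hs2]; ring
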